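/- Let R, R_1,…,R_K be Hermitian PSD M×M matrices with R − Σ_{k=1}^K R_k PSD, and h_k ∈ ℂ^M with h_k^H R_k h_k ≠ 0. With w_k = (h_k^H R_k h_k)^{-1/2} R_k h_k and W_c the matrix with columns w_k, the matrix R − W_c W_c^H is positive semidefinite, and hence admits a factorization R − W_c W_c^H = W_r W_r^H for some W_r ∈ ℂ^{M×M}. -/

import Mathlib

open Matrix ComplexOrder

lemma dot_cs {n : ℕ} (a b : Fin n → ℂ) :
    ‖star a ⬝ᵥ b‖ ^ 2 ≤ (star a ⬝ᵥ a).re * (star b ⬝ᵥ b).re := by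
  have ha : ∀ u v : Fin n → ℂ,
      star u ⬝ᵥ v = inner (𝕜 := ℂ) (E := EuclideanSpace ℂ (Fin n)) (WithLp.toLp 2 u) (WithLp.toLp 2 v) := by
    intro u v
    simp [PiLp.inner_apply, dotProduct, RCLike.inner_apply, mul_comm]
  rw [ha, ha, ha, ← RCLike.re_to_complex, ← RCLike.re_to_complex,
    inner_self_eq_norm_sq, inner_self_eq_norm_sq, ← mul_pow]
  exact pow_le_pow_left₀ (norm_nonneg _) (norm_inner_le_norm _ _) 2

-- quadratic form through the sqrt
open scoped MatrixOrder in
lemma quad_sqrt {n : ℕ} {A : Matrix (Fin n) (Fin n) ℂ} (hA : A.PosSemidef)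
    (u v : Fin n → ℂ) :
    star u ⬝ᵥ A.mulVec v = star ((CFC.sqrt A).mulVec u) ⬝ᵥ ((CFC.sqrt A).mulVec v) := by
  conv_lhs => rw [← CFC.sqrt_mul_sqrt_self A hA.nonneg]
  rw [star_mulVec, ← mulVec_mulVec, ← dotProduct_mulVec,
    (CFC.sqrt_nonneg A).posSemidef.isHermitian.eq]

open scoped MatrixOrder in
lemma col_bound {n : ℕ} {A : Matrix (Fin n) (Fin n) ℂ} (hA : A.PosSemidef)
    {h : Fin n → ℂ} (hne : star h ⬝ᵥ A.mulVec h ≠ 0) (x : Fin n → ℂ) :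
    ‖star ((Real.sqrt ((star h ⬝ᵥ A.mulVec h).re))⁻¹ • A.mulVec h) ⬝ᵥ x‖ ^ 2
      ≤ (star x ⬝ᵥ A.mulVec x).re := by
  set t := star h ⬝ᵥ A.mulVec h with htdef
  have htre : 0 < t.re := by
    have h0 : 0 ≤ t := hA.dotProduct_mulVec_nonneg h
    rcases lt_or_eq_of_le h0 with h1 | h1
    · exact (Complex.lt_def.mp h1).1
    · exact absurd h1.symm hne
  have hstar : star ((Real.sqrt t.re)⁻¹ • A.mulVec h)
      = (Real.sqrt t.re)⁻¹ • star (A.mulVec h) := by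
    simp [star_smul]
  rw [hstar, smul_dotProduct]
  have hdot : star (A.mulVec h) ⬝ᵥ x = star h ⬝ᵥ A.mulVec x := by
    rw [star_mulVec, hA.isHermitian.eq, ← dotProduct_mulVec]
  rw [hdot]
  have hcs := dot_cs ((CFC.sqrt A).mulVec h) ((CFC.sqrt A).mulVec x)
  rw [← quad_sqrt hA h h, ← quad_sqrt hA h x, ← quad_sqrt hA x x, ← htdef] at hcs
  have hnorm : ‖(Real.sqrt t.re)⁻¹ • (star h ⬝ᵥ A.mulVec x)‖ ^ 2
      = (t.re)⁻¹ * ‖star h ⬝ᵥ A.mulVec x‖ ^ 2 := by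
    rw [norm_smul, mul_pow, Real.norm_eq_abs, sq_abs, inv_pow,
      Real.sq_sqrt htre.le]
  rw [hnorm]
  calc (t.re)⁻¹ * ‖star h ⬝ᵥ A.mulVec x‖ ^ 2
      ≤ (t.re)⁻¹ * (t.re * (star x ⬝ᵥ A.mulVec x).re) :=
        mul_le_mul_of_nonneg_left hcs (inv_nonneg.mpr htre.le)
    _ = (star x ⬝ᵥ A.mulVec x).re := by field_simp

lemma sum_mulVec' {n m : ℕ} {ι : Type*} (s : Finset ι)
    (A : ι → Matrix (Fin n) (Fin m) ℂ) (x : Fin m → ℂ) :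
    (∑ k ∈ s, A k) *ᵥ x = ∑ k ∈ s, (A k *ᵥ x) := by
  ext i
  simp [mulVec, dotProduct, Matrix.sum_apply, Finset.sum_mul]
  rw [Finset.sum_comm]

lemma dotProduct_sum' {m : ℕ} {ι : Type*} (s : Finset ι)
    (x : Fin m → ℂ) (v : ι → (Fin m → ℂ)) :
    x ⬝ᵥ (∑ k ∈ s, v k) = ∑ k ∈ s, x ⬝ᵥ v k := by
  simp [dotProduct, Finset.sum_apply, Finset.mul_sum]
  rw [Finset.sum_comm]

theorem radar_covariance_factorization {M K : ℕ}
    (R : Matrix (Fin M) (Fin M) ℂ) (hRpsd : R.PosSemidef)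
    (Rk : Fin K → Matrix (Fin M) (Fin M) ℂ)
    (hRk : ∀ k, (Rk k).PosSemidef)
    (hsum : (R - ∑ k, Rk k).PosSemidef)
    (h : Fin K → (Fin M → ℂ))
    (hh : ∀ k, star (h k) ⬝ᵥ (Rk k).mulVec (h k) ≠ 0) :
    let w : Fin K → (Fin M → ℂ) := fun k =>
      (Real.sqrt ((star (h k) ⬝ᵥ (Rk k).mulVec (h k)).re))⁻¹ • (Rk k).mulVec (h k)
    let Wc : Matrix (Fin M) (Fin K) ℂ := Matrix.of fun i k => w k i
    (R - Wc * Wcᴴ).PosSemidef ∧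
    ∃ Wr : Matrix (Fin M) (Fin M) ℂ, R - Wc * Wcᴴ = Wr * Wrᴴ := by
  intro w Wc
  have hher : (R - Wc * Wcᴴ).IsHermitian :=
    hRpsd.isHermitian.sub (isHermitian_mul_conjTranspose_self Wc)
  have key : (R - Wc * Wcᴴ).PosSemidef := by
    refine PosSemidef.of_dotProduct_mulVec_nonneg hher fun x => ?_
    set z := star x ⬝ᵥ (R - Wc * Wcᴴ) *ᵥ x with hz
    have h1 : 0 ≤ star x ⬝ᵥ (Wc * Wcᴴ) *ᵥ x := (posSemidef_self_mul_conjTranspose Wc).dotProduct_mulVec_nonneg x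
    have h2 : 0 ≤ star x ⬝ᵥ R *ᵥ x := hRpsd.dotProduct_mulVec_nonneg x
    have him : z.im = 0 := by
      rw [hz, sub_mulVec, dotProduct_sub]
      rw [Complex.le_def] at h1 h2
      simp [Complex.sub_im, ← h1.2, ← h2.2]
    -- the quadratic form of Wc * Wcᴴ
    have hy : ∀ k, (Wcᴴ *ᵥ x) k = star (w k) ⬝ᵥ x := by
      intro k
      simp only [mulVec, dotProduct, conjTranspose_apply, Wc, of_apply, Pi.star_apply]
    have hquad : star x ⬝ᵥ (Wc * Wcᴴ) *ᵥ x = star (Wcᴴ *ᵥ x) ⬝ᵥ (Wcᴴ *ᵥ x) := by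
      rw [star_mulVec, conjTranspose_conjTranspose, ← dotProduct_mulVec,
        mulVec_mulVec]
    have hre1 : (star x ⬝ᵥ (Wc * Wcᴴ) *ᵥ x).re
        = ∑ k, ‖star (w k) ⬝ᵥ x‖ ^ 2 := by
      rw [hquad]
      simp only [dotProduct, Pi.star_apply, Complex.re_sum]
      refine Finset.sum_congr rfl fun k _ => ?_
      rw [hy k]
      rw [Complex.star_def, ← Complex.normSq_eq_conj_mul_self]
      simp [Complex.normSq_eq_norm_sq, dotProduct, ← Complex.ofReal_pow]
    have hle1 : ∑ k, ‖star (w k) ⬝ᵥ x‖ ^ 2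
        ≤ (star x ⬝ᵥ (∑ k, Rk k) *ᵥ x).re := by
      rw [sum_mulVec', dotProduct_sum', Complex.re_sum]
      exact Finset.sum_le_sum fun k _ => col_bound (hRk k) (hh k) x
    have hle2 : (star x ⬝ᵥ (∑ k, Rk k) *ᵥ x).re ≤ (star x ⬝ᵥ R *ᵥ x).re := by
      have h0 : 0 ≤ star x ⬝ᵥ (R - ∑ k, Rk k) *ᵥ x := hsum.dotProduct_mulVec_nonneg x
      rw [Complex.le_def] at h0
      have := h0.1
      rw [sub_mulVec, dotProduct_sub] at this
      simp only [Complex.sub_re, Complex.zero_re] at this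
      linarith
    have hre : 0 ≤ z.re := by
      rw [hz, sub_mulVec, dotProduct_sub]
      simp only [Complex.sub_re]
      rw [hre1]
      linarith
    rw [Complex.le_def]
    exact ⟨by simpa using hre, by simp [him]⟩
  open scoped MatrixOrder in
  refine ⟨key, CFC.sqrt (R - Wc * Wcᴴ), ?_⟩
  open scoped MatrixOrder in
  rw [show (CFC.sqrt (R - Wc * Wcᴴ))ᴴ = CFC.sqrt (R - Wc * Wcᴴ) from (CFC.sqrt_nonneg _).posSemidef.isHermitian,
    CFC.sqrt_mul_sqrt_self _ key.nonneg]
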